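/- Let n > 1 and let θ be a character of (Z/nZ)* extended by zero to Z/nZ. Let x be an integer with gcd(x, n) = n/e and write x̃ = x/(n/e), coprime to e. If θ has conductor f, then (1/n)·∑_{h mod n} ⟨hx⟩_n · θ(h) equals 0 if f does not divide e, and equals (φ(n)/φ(e)) · B₁,θ^e · θ̄(x̃) if f divides e, where B₁,θ^e = (1/e)∑_{t=1}^{e} t·θ(t) is the generalized Bernoulli number and θ̄ is the complex conjugate character. -/

import Mathlib

/-- The generalized first Bernoulli number `B₁,θ = (1/N) ∑_{t=1}^{N} t·θ(t)`. -/
noncomputable def bernoulliOne (N : ℕ) (θ : DirichletCharacter ℂ N) : ℂ :=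
  (N : ℂ)⁻¹ * ∑ t ∈ Finset.range N, (t : ℂ) * θ (t : ZMod N)

open Finset DirichletCharacter

/-- An integer coprime to `e` casts to a unit in `ZMod e`. -/
lemma RSB.isUnit_intCast_of_isCoprime {e : ℕ} {z : ℤ} (h : IsCoprime z (e : ℤ)) :
    IsUnit ((z : ℤ) : ZMod e) := by
  obtain ⟨a, b, hab⟩ := h
  refine IsUnit.of_mul_eq_one ((a : ℤ) : ZMod e) ?_
  have := congrArg (fun y : ℤ => (y : ZMod e)) hab
  push_cast at this
  rw [ZMod.natCast_self, mul_zero, add_zero] at this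
  rw [mul_comm]
  exact this

/-- CRT-type lifting of congruences to a unit. -/
lemma RSB.exists_unit_congr {n : ℕ} [NeZero n] {d c : ℕ} (hdn : d ∣ n) (hcn : c ∣ n)
    (u : (ZMod n)ˣ) (hu : ZMod.unitsMap ((Nat.gcd_dvd_left d c).trans hdn) u = 1) :
    ∃ v : (ZMod n)ˣ, ZMod.unitsMap hdn v = ZMod.unitsMap hdn u ∧ ZMod.unitsMap hcn v = 1 := by
  set a : ℕ := ((u : ZMod n)).val with ha_def
  have ha : ((a : ℕ) : ZMod n) = (u : ZMod n) := by
    rw [ha_def, ZMod.natCast_val, ZMod.cast_id]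
  set g : ℕ := Nat.gcd d c with hg_def
  have hgn : g ∣ n := (Nat.gcd_dvd_left d c).trans hdn
  -- from hu : (a : ZMod g) = 1
  have hag : ((a : ℕ) : ZMod g) = 1 := by
    have := congrArg (fun w : (ZMod g)ˣ => (w : ZMod g)) hu
    simp only [ZMod.unitsMap_def, Units.coe_map, MonoidHom.coe_coe, Units.val_one] at this
    rw [← ha, ZMod.castHom_apply, ZMod.cast_natCast hgn] at this
    exact this
  have hga : (g : ℤ) ∣ (a : ℤ) - 1 := by
    rw [← ZMod.intCast_zmod_eq_zero_iff_dvd]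
    push_cast
    rw [hag]
    ring
  obtain ⟨k, hk⟩ := hga
  set s : ℤ := Int.gcdA d c with hs_def
  set t : ℤ := Int.gcdB d c with ht_def
  have hbez : (g : ℤ) = d * s + c * t := by
    have := Int.gcd_eq_gcd_ab (d : ℤ) (c : ℤ)
    rwa [Int.gcd_natCast_natCast] at this
  set z : ℤ := (a : ℤ) - k * s * d with hz_def
  have hz_d : ((d : ℤ)) ∣ z - a := ⟨-(k * s), by rw [hz_def]; ring⟩
  have hz_c : ((c : ℤ)) ∣ z - 1 := ⟨k * t, by rw [hz_def]; linear_combination hk + k * hbez⟩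
  have hcop_an : IsCoprime (a : ℤ) (n : ℤ) :=
    Nat.isCoprime_iff_coprime.mpr (ZMod.val_coe_unit_coprime u)
  have hcop_zd : IsCoprime z (d : ℤ) := by
    have h1 : IsCoprime (a : ℤ) (d : ℤ) :=
      hcop_an.of_isCoprime_of_dvd_right (Int.natCast_dvd_natCast.mpr hdn)
    have : z = (a : ℤ) + (d : ℤ) * (-(k * s)) := by rw [hz_def]; ring
    rw [this]
    exact h1.add_mul_left_left _
  have hcop_zc : IsCoprime z (c : ℤ) := by
    obtain ⟨w, hw⟩ := hz_c
    have : z = 1 + (c : ℤ) * w := by linarith [hw]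
    rw [this]
    exact (isCoprime_one_left).add_mul_left_left _
  set m : ℕ := Nat.lcm d c with hm_def
  have hmn : m ∣ n := Nat.lcm_dvd hdn hcn
  haveI : NeZero m := ⟨fun h0 => (NeZero.ne n) (Nat.eq_zero_of_zero_dvd (h0 ▸ hmn))⟩
  have hcop_zm : IsCoprime z (m : ℤ) := by
    refine (hcop_zd.mul_right hcop_zc).of_isCoprime_of_dvd_right ?_
    have : (m : ℕ) ∣ d * c := Nat.lcm_dvd_mul d c
    exact_mod_cast Int.natCast_dvd_natCast.mpr this
  have hzm_unit : IsUnit ((z : ℤ) : ZMod m) := RSB.isUnit_intCast_of_isCoprime hcop_zm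
  obtain ⟨v, hv⟩ := ZMod.unitsMap_surjective hmn hzm_unit.unit
  have hdm : d ∣ m := Nat.dvd_lcm_left d c
  have hcm : c ∣ m := Nat.dvd_lcm_right d c
  have hvm : ((ZMod.unitsMap hmn v : (ZMod m)ˣ) : ZMod m) = ((z : ℤ) : ZMod m) := by
    rw [hv, IsUnit.unit_spec]
  refine ⟨v, ?_, ?_⟩
  · -- unitsMap hdn v = unitsMap hdn u
    have hcomp := DFunLike.congr_fun (ZMod.unitsMap_comp hdm hmn) v
    simp only [MonoidHom.comp_apply] at hcomp
    apply Units.ext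
    have h1 : ((ZMod.unitsMap hdn v : (ZMod d)ˣ) : ZMod d) = ((z : ℤ) : ZMod d) := by
      rw [show ZMod.unitsMap hdn v = ZMod.unitsMap hdm (ZMod.unitsMap hmn v) from hcomp.symm]
      rw [ZMod.unitsMap_def, Units.coe_map, MonoidHom.coe_coe, hvm]
      exact map_intCast (ZMod.castHom hdm (ZMod d)) z
    have h2 : ((z : ℤ) : ZMod d) = ((a : ℕ) : ZMod d) := by
      have : (((z - a : ℤ)) : ZMod d) = 0 := (ZMod.intCast_zmod_eq_zero_iff_dvd _ _).mpr hz_d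
      push_cast at this ⊢
      linear_combination this
    have h3 : ((ZMod.unitsMap hdn u : (ZMod d)ˣ) : ZMod d) = ((a : ℕ) : ZMod d) := by
      rw [ZMod.unitsMap_def, Units.coe_map, MonoidHom.coe_coe, ZMod.castHom_apply, ← ha,
        ZMod.cast_natCast hdn]
    rw [h1, h2, h3]
  · -- unitsMap hcn v = 1
    have hcomp := DFunLike.congr_fun (ZMod.unitsMap_comp hcm hmn) v
    simp only [MonoidHom.comp_apply] at hcomp
    apply Units.ext
    have h1 : ((ZMod.unitsMap hcn v : (ZMod c)ˣ) : ZMod c) = ((z : ℤ) : ZMod c) := by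
      rw [show ZMod.unitsMap hcn v = ZMod.unitsMap hcm (ZMod.unitsMap hmn v) from hcomp.symm]
      rw [ZMod.unitsMap_def, Units.coe_map, MonoidHom.coe_coe, hvm]
      exact map_intCast (ZMod.castHom hcm (ZMod c)) z
    have h2 : ((z : ℤ) : ZMod c) = 1 := by
      have : (((z - 1 : ℤ)) : ZMod c) = 0 := (ZMod.intCast_zmod_eq_zero_iff_dvd _ _).mpr hz_c
      push_cast at this
      linear_combination this
    rw [h1, h2, Units.val_one]

/-- The conductor divides any level that the character factors through. -/
lemma RSB.conductor_dvd_of_factorsThrough {n : ℕ} [NeZero n] (χ : DirichletCharacter ℂ n)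
    {d : ℕ} (h : χ.FactorsThrough d) : χ.conductor ∣ d := by
  have hdn : d ∣ n := h.dvd
  set c : ℕ := χ.conductor with hc_def
  have hcn : c ∣ n := conductor_dvd_level χ
  set g : ℕ := Nat.gcd d c with hg_def
  have hgn : g ∣ n := (Nat.gcd_dvd_left d c).trans hdn
  have hkd : (ZMod.unitsMap hdn).ker ≤ (MulChar.toUnitHom χ).ker :=
    (factorsThrough_iff_ker_unitsMap hdn).mp h
  have hkc : (ZMod.unitsMap hcn).ker ≤ (MulChar.toUnitHom χ).ker :=
    (factorsThrough_iff_ker_unitsMap hcn).mp (factorsThrough_conductor χ)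
  have hFg : χ.FactorsThrough g := by
    rw [factorsThrough_iff_ker_unitsMap hgn]
    intro u hu
    have hu' : ZMod.unitsMap ((Nat.gcd_dvd_left d c).trans hdn) u = 1 := hu
    obtain ⟨v, hvd, hvc⟩ := RSB.exists_unit_congr hdn hcn u hu'
    have h1 : MulChar.toUnitHom χ v = 1 := hkc (by exact hvc)
    have h2 : MulChar.toUnitHom χ (v⁻¹ * u) = 1 := by
      apply hkd
      show ZMod.unitsMap hdn (v⁻¹ * u) = 1
      rw [map_mul, map_inv, hvd, inv_mul_cancel]
    show MulChar.toUnitHom χ u = 1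
    have : u = v * (v⁻¹ * u) := by group
    rw [this, map_mul, h1, h2, one_mul]
  have h1 : c ≤ g := Nat.sInf_le hFg
  have h2 : g ∣ c := Nat.gcd_dvd_right d c
  have hc0 : c ≠ 0 := conductor_ne_zero χ
  have hgc : g = c := Nat.le_antisymm (Nat.le_of_dvd (Nat.pos_of_ne_zero hc0) h2) h1
  exact hgc ▸ Nat.gcd_dvd_left d c

/-- Sum over `ZMod n` of a function vanishing on non-units equals the sum over units. -/
lemma RSB.sum_units_aux {n : ℕ} (f : ZMod n → ℂ) [NeZero n]
    (hf : ∀ a, ¬ IsUnit a → f a = 0) :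
    ∑ a : ZMod n, f a = ∑ u : (ZMod n)ˣ, f ↑u := by
  classical
  have h1 : ∑ a ∈ Finset.univ.filter (fun a : ZMod n => IsUnit a), f a = ∑ a : ZMod n, f a :=
    Finset.sum_filter_of_ne (fun a _ h => by by_contra hu; exact h (hf a hu))
  rw [← h1]
  refine (Finset.sum_bij (fun (u : (ZMod n)ˣ) _ => (u : ZMod n)) ?_ ?_ ?_ ?_).symm
  · intro u _
    simp [Units.isUnit]
  · intro u₁ _ u₂ _ h
    exact Units.ext h
  · intro b hb
    simp only [Finset.mem_filter] at hb
    exact ⟨hb.2.unit, Finset.mem_univ _, rfl⟩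
  · intro u _
    rfl

theorem residue_sum_eq_bernoulli_general (n : ℕ) (hn : 1 < n)
    (θ : DirichletCharacter ℂ n) (x : ℤ) (e : ℕ) (he : e ∣ n) (hepos : 0 < e)
    (hgcd : Int.gcd x (n : ℤ) = n / e) :
    ((¬ θ.conductor ∣ e →
      (n : ℂ)⁻¹ * ∑ h ∈ Finset.range n, (((h * x) % (n : ℤ) : ℤ) : ℂ) * θ (h : ZMod n) = 0) ∧
    (∀ hfe : θ.conductor ∣ e,
      (n : ℂ)⁻¹ * ∑ h ∈ Finset.range n, (((h * x) % (n : ℤ) : ℤ) : ℂ) * θ (h : ZMod n) =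
        ((Nat.totient n : ℂ) / (Nat.totient e : ℂ)) *
          bernoulliOne e (DirichletCharacter.changeLevel hfe θ.primitiveCharacter) *
          (starRingEnd ℂ)
            ((DirichletCharacter.changeLevel hfe θ.primitiveCharacter)
              ((x / ((n : ℤ) / (e : ℤ))) : ZMod e)))) := by
  classical
  haveI : NeZero n := ⟨by omega⟩
  haveI : NeZero e := ⟨hepos.ne'⟩
  set d : ℕ := n / e with hd_def
  have hn_eq : n = d * e := by rw [hd_def, Nat.div_mul_cancel he]
  have hd0 : 0 < d :=
    Nat.pos_of_ne_zero (fun h0 => by rw [h0, zero_mul] at hn_eq; omega)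
  have hdx : (d : ℤ) ∣ x := by
    rw [← hgcd]
    exact Int.gcd_dvd_left _ _
  set xt : ℤ := x / (d : ℤ) with hxt_def
  have hx_eq : x = (d : ℤ) * xt := (Int.mul_ediv_cancel' hdx).symm
  have hnZ : (n : ℤ) = (d : ℤ) * (e : ℤ) := by exact_mod_cast congrArg (Nat.cast : ℕ → ℤ) hn_eq
  have hcop_xte : Int.gcd xt (e : ℤ) = 1 := by
    have h1 : Int.gcd ((d : ℤ) * xt) ((d : ℤ) * (e : ℤ)) = (d : ℤ).natAbs * Int.gcd xt e :=
      Int.gcd_mul_left _ _ _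
    rw [← hx_eq, ← hnZ, hgcd] at h1
    have hdnat : (d : ℤ).natAbs = d := Int.natAbs_natCast d
    rw [hdnat] at h1
    have h2 : d * 1 = d * Int.gcd xt (e : ℤ) := by rw [mul_one]; exact h1
    exact (Nat.eq_of_mul_eq_mul_left hd0 h2).symm
  have hunit : IsUnit ((xt : ℤ) : ZMod e) :=
    RSB.isUnit_intCast_of_isCoprime (Int.isCoprime_iff_gcd_eq_one.mpr hcop_xte)
  set uξ : (ZMod e)ˣ := hunit.unit with huξ_def
  have huξ : (uξ : ZMod e) = ((xt : ℤ) : ZMod e) := hunit.unit_spec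
  set π : (ZMod n)ˣ →* (ZMod e)ˣ := ZMod.unitsMap he with hπ_def
  set g : (ZMod e)ˣ → ℂ := fun t => ((((t : ZMod e) * ((xt : ℤ) : ZMod e)).val : ℕ) : ℂ)
    with hg_def
  set S : ℂ := ∑ h ∈ Finset.range n, (((h * x) % (n : ℤ) : ℤ) : ℂ) * θ (h : ZMod n) with hS_def
  -- Step A: convert to sum over units
  have stepA : S = ∑ u : (ZMod n)ˣ,
      (((((u : ZMod n).val : ℤ) * x) % (n : ℤ) : ℤ) : ℂ) * θ ↑u := by
    rw [hS_def]
    have A0 : ∑ h ∈ Finset.range n, (((h * x) % (n : ℤ) : ℤ) : ℂ) * θ (h : ZMod n)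
        = ∑ a : ZMod n, (((((a.val : ℕ) : ℤ) * x) % (n : ℤ) : ℤ) : ℂ) * θ a := by
      refine Finset.sum_nbij' (fun h => ((h : ℕ) : ZMod n)) (fun a => a.val)
        (fun _ _ => Finset.mem_univ _) (fun a _ => Finset.mem_range.mpr (ZMod.val_lt a))
        (fun a ha => ZMod.val_cast_of_lt (Finset.mem_range.mp ha))
        (fun a _ => by simp) ?_
      intro a ha
      simp only [ZMod.val_cast_of_lt (Finset.mem_range.mp ha)]
    rw [A0]
    refine RSB.sum_units_aux _ (fun a ha => ?_)
    rw [θ.map_nonunit ha, mul_zero]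
  -- Step B: rewrite each term
  have stepB : ∀ u : (ZMod n)ˣ,
      (((((u : ZMod n).val : ℤ) * x) % (n : ℤ) : ℤ) : ℂ) * θ ↑u
        = (d : ℂ) * (g (π u) * θ ↑u) := by
    intro u
    set a : ℕ := (u : ZMod n).val with ha_def
    have h1 : ((a : ℤ) * x) % (n : ℤ) = (d : ℤ) * (((a : ℤ) * xt) % (e : ℤ)) := by
      rw [hx_eq, hnZ]
      rw [show (a : ℤ) * ((d : ℤ) * xt) = (d : ℤ) * ((a : ℤ) * xt) by ring]
      exact Int.mul_emod_mul_of_pos _ _ (by exact_mod_cast hd0)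
    have h2 : ((a : ℤ) * xt) % (e : ℤ) = (((((a : ℤ) * xt : ℤ) : ZMod e)).val : ℤ) := by
      rw [ZMod.val_intCast]
    have h3 : ((((a : ℤ) * xt : ℤ)) : ZMod e) = ((π u : ZMod e)) * ((xt : ℤ) : ZMod e) := by
      push_cast
      congr 1
      rw [hπ_def, ZMod.unitsMap_def, Units.coe_map, MonoidHom.coe_coe, ZMod.castHom_apply,
        ← ZMod.natCast_val, ha_def]
    rw [h1, h2, h3]
    push_cast
    rw [hg_def]
    push_cast
    ring
  have stepAB : S = (d : ℂ) * ∑ u : (ZMod n)ˣ, g (π u) * θ ↑u := by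
    rw [stepA, Finset.mul_sum]
    exact Finset.sum_congr rfl (fun u _ => stepB u)
  -- Step C: fiberwise
  have stepC : ∑ u : (ZMod n)ˣ, g (π u) * θ ↑u
      = ∑ t : (ZMod e)ˣ, g t * ∑ u ∈ Finset.univ.filter (fun u => π u = t), θ ↑u := by
    rw [← Finset.sum_fiberwise Finset.univ π (fun u => g (π u) * θ ↑u)]
    refine Finset.sum_congr rfl (fun t _ => ?_)
    rw [Finset.mul_sum]
    refine Finset.sum_congr rfl (fun u hu => ?_)
    rw [(Finset.mem_filter.mp hu).2]
  constructor
  · -- Case f ∤ e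
    intro hc
    have hnotle : ¬ ((ZMod.unitsMap he).ker ≤ (MulChar.toUnitHom θ).ker) := by
      intro hle
      exact hc (RSB.conductor_dvd_of_factorsThrough θ
        ((factorsThrough_iff_ker_unitsMap he).mpr hle))
    obtain ⟨k₀, hk₀mem, hk₀ne⟩ := SetLike.not_le_iff_exists.mp hnotle
    have hπk₀ : π k₀ = 1 := hk₀mem
    have hθk₀ : θ ↑k₀ ≠ 1 := by
      intro habs
      apply hk₀ne
      show MulChar.toUnitHom θ k₀ = 1
      apply Units.ext
      rw [MulChar.coe_toUnitHom, habs, Units.val_one]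
    have hT : ∀ t : (ZMod e)ˣ, ∑ u ∈ Finset.univ.filter (fun u => π u = t), θ ↑u = 0 := by
      intro t
      set T : ℂ := ∑ u ∈ Finset.univ.filter (fun u => π u = t), θ ↑u with hT_def
      have key : θ ↑k₀ * T = T := by
        rw [hT_def, Finset.mul_sum]
        refine Finset.sum_nbij' (fun u => k₀ * u) (fun u => k₀⁻¹ * u) ?_ ?_ ?_ ?_ ?_
        · intro u hu
          simp only [Finset.mem_filter, Finset.mem_univ, true_and] at hu ⊢
          rw [map_mul, hπk₀, hu, one_mul]
        · intro u hu
          simp only [Finset.mem_filter, Finset.mem_univ, true_and] at hu ⊢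
          rw [map_mul, map_inv, hπk₀, hu, inv_one, one_mul]
        · intro u _; group
        · intro u _; group
        · intro u _
          rw [Units.val_mul, map_mul]
      have : (θ ↑k₀ - 1) * T = 0 := by rw [sub_mul, one_mul, key, sub_self]
      rcases mul_eq_zero.mp this with h | h
      · exact absurd (by linear_combination h) hθk₀
      · exact h
    rw [stepAB, stepC]
    simp only [hT, mul_zero, Finset.sum_const_zero]
  · -- Case f ∣ e
    intro hfe
    set θ' : DirichletCharacter ℂ e := DirichletCharacter.changeLevel hfe θ.primitiveCharacter
      with hθ'_def
    have hfact : θ = DirichletCharacter.changeLevel he θ' := by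
      have h1 : θ = DirichletCharacter.changeLevel (conductor_dvd_level θ)
          θ.primitiveCharacter :=
        Classical.choose_spec (factorsThrough_conductor θ).choose_spec
      rw [hθ'_def, ← changeLevel_trans θ.primitiveCharacter hfe he]
      exact h1
    have hθu : ∀ u : (ZMod n)ˣ, θ ↑u = θ' ↑(π u) := by
      intro u
      rw [hfact, changeLevel_eq_cast_of_dvd]
      congr 1
    -- fibers all have the same cardinality
    have hfib : ∀ t : (ZMod e)ˣ, (Finset.univ.filter (fun u : (ZMod n)ˣ => π u = t)).card
        = (Finset.univ.filter (fun u : (ZMod n)ˣ => π u = 1)).card := by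
      intro t
      obtain ⟨u₀, hu₀⟩ := ZMod.unitsMap_surjective he t
      have hu₀' : π u₀ = t := hu₀
      refine Finset.card_nbij' (fun u => u₀⁻¹ * u) (fun u => u₀ * u) ?_ ?_ ?_ ?_
      · intro u hu
        simp only [Finset.mem_coe, Finset.mem_filter, Finset.mem_univ, true_and] at hu ⊢
        rw [map_mul, map_inv, hu₀', hu, inv_mul_cancel]
      · intro u hu
        simp only [Finset.mem_coe, Finset.mem_filter, Finset.mem_univ, true_and] at hu ⊢
        rw [map_mul, hu₀', hu, mul_one]
      · intro u _; group
      · intro u _; group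
    set c : ℕ := (Finset.univ.filter (fun u : (ZMod n)ˣ => π u = 1)).card with hc_def
    have hcount : c * e.totient = n.totient := by
      have h1 : ∑ t : (ZMod e)ˣ,
          (Finset.univ.filter (fun u : (ZMod n)ˣ => π u = t)).card
          = Fintype.card (ZMod n)ˣ := by
        rw [Finset.sum_card_fiberwise_eq_card_filter,
          Finset.filter_true_of_mem (fun _ _ => Finset.mem_univ _), Finset.card_univ]
      have h2 : ∑ t : (ZMod e)ˣ,
          (Finset.univ.filter (fun u : (ZMod n)ˣ => π u = t)).card
          = Fintype.card (ZMod e)ˣ * c := by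
        rw [Finset.sum_congr rfl (fun t _ => hfib t), Finset.sum_const, Finset.card_univ,
          smul_eq_mul]
      rw [h1] at h2
      rw [← ZMod.card_units_eq_totient, ← ZMod.card_units_eq_totient, h2, Nat.mul_comm]
    -- fiber sums
    have hT : ∀ t : (ZMod e)ˣ, ∑ u ∈ Finset.univ.filter (fun u => π u = t), θ ↑u
        = (c : ℂ) * θ' ↑t := by
      intro t
      have h1 : ∀ u ∈ Finset.univ.filter (fun u : (ZMod n)ˣ => π u = t), θ ↑u = θ' ↑t := by
        intro u hu
        rw [hθu u, (Finset.mem_filter.mp hu).2]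
      rw [Finset.sum_congr rfl h1, Finset.sum_const, hfib t, nsmul_eq_mul]
    -- the unit-sum over ZMod e
    have stepF : ∑ s : (ZMod e)ˣ, (((s : ZMod e).val : ℕ) : ℂ) * θ' ↑s
        = (e : ℂ) * bernoulliOne e θ' := by
      have hB : ∑ t ∈ Finset.range e, (t : ℂ) * θ' ((t : ℕ) : ZMod e)
          = ∑ a : ZMod e, ((a.val : ℕ) : ℂ) * θ' a := by
        refine Finset.sum_nbij' (fun h => ((h : ℕ) : ZMod e)) (fun a => a.val)
          (fun _ _ => Finset.mem_univ _) (fun a _ => Finset.mem_range.mpr (ZMod.val_lt a))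
          (fun a ha => ZMod.val_cast_of_lt (Finset.mem_range.mp ha))
          (fun a _ => by simp) ?_
        intro a ha
        simp only [ZMod.val_cast_of_lt (Finset.mem_range.mp ha)]
      have hB2 : ∑ a : ZMod e, ((a.val : ℕ) : ℂ) * θ' a
          = ∑ s : (ZMod e)ˣ, (((s : ZMod e).val : ℕ) : ℂ) * θ' ↑s := by
        refine RSB.sum_units_aux _ (fun a ha => ?_)
        rw [θ'.map_nonunit ha, mul_zero]
      rw [← hB2, ← hB, bernoulliOne]
      have he0 : (e : ℂ) ≠ 0 := Nat.cast_ne_zero.mpr hepos.ne'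
      field_simp
    -- reindexing
    have stepE : ∑ t : (ZMod e)ˣ, g t * θ' ↑t
        = ((e : ℂ) * bernoulliOne e θ') * θ' ↑(uξ⁻¹) := by
      rw [← stepF, Finset.sum_mul]
      refine (Fintype.sum_equiv (Equiv.mulRight uξ⁻¹)
        (fun s => (((s : ZMod e).val : ℕ) : ℂ) * θ' ↑s * θ' ↑(uξ⁻¹))
        (fun t => g t * θ' ↑t) ?_).symm
      intro s
      simp only [Equiv.coe_mulRight]
      have h1 : g (s * uξ⁻¹) = (((s : ZMod e).val : ℕ) : ℂ) := by
        simp only [hg_def]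
        have : ((s * uξ⁻¹ : (ZMod e)ˣ) : ZMod e) * ((xt : ℤ) : ZMod e) = (s : ZMod e) := by
          rw [← huξ, Units.val_mul, mul_assoc]
          norm_cast
          simp
        rw [this]
      have h2 : θ' ↑(s * uξ⁻¹) = θ' ↑s * θ' ↑(uξ⁻¹) := by
        rw [Units.val_mul, map_mul]
      rw [h1, h2]
      ring
    -- conjugate
    have stepG : θ' ↑(uξ⁻¹) = (starRingEnd ℂ) (θ' ((x / ((n : ℤ) / (e : ℤ))) : ZMod e)) := by
      have hdiv : (n : ℤ) / (e : ℤ) = (d : ℤ) := by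
        rw [hnZ, mul_comm]
        exact Int.mul_ediv_cancel_left _ (Int.natCast_ne_zero.mpr hepos.ne')
      rw [hdiv, ← hxt_def]
      have : ((xt : ℤ) : ZMod e) = ↑uξ := huξ.symm
      rw [this]
      rw [starRingEnd_apply, MulChar.star_apply', MulChar.inv_apply, Ring.inverse_unit]
    -- assemble
    rw [stepAB, stepC]
    have hsum : ∑ t : (ZMod e)ˣ, g t * ∑ u ∈ Finset.univ.filter (fun u => π u = t), θ ↑u
        = (c : ℂ) * (((e : ℂ) * bernoulliOne e θ') * θ' ↑(uξ⁻¹)) := by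
      rw [Finset.sum_congr rfl (fun t _ => by rw [hT t])]
      rw [← stepE, Finset.mul_sum]
      exact Finset.sum_congr rfl (fun t _ => by ring)
    rw [hsum, stepG]
    have hcC : (c : ℂ) * (e.totient : ℂ) = (n.totient : ℂ) := by exact_mod_cast hcount
    have hφe : ((e.totient : ℕ) : ℂ) ≠ 0 := Nat.cast_ne_zero.mpr (Nat.totient_pos.mpr hepos).ne'
    have hnC : (n : ℂ) = (d : ℂ) * (e : ℂ) := by exact_mod_cast hn_eq
    have hdC : (d : ℂ) ≠ 0 := Nat.cast_ne_zero.mpr hd0.ne'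
    have heC : (e : ℂ) ≠ 0 := Nat.cast_ne_zero.mpr hepos.ne'
    have hcval : (c : ℂ) = (n.totient : ℂ) / (e.totient : ℂ) := by
      field_simp [← hcC]
      exact hcC
    rw [hnC, hcval]
    field_simp
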